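/- The ◁-maximal stable partition-relation pair over G is exactly the one induced by partial bisimilarity: the pair (P, ≤) with P = S/≃_B and [p] ≤ [q] iff p ≤_B q is stable, and every stable partition-relation pair (P', ≤') over G satisfies (P', ≤') ◁ (P, ≤). -/
import Mathlib


variable {S A : Type*}

/-- R is a partial bisimulation w.r.t. the bisimulation action set B. -/
def IsPB (tm : S → Prop) (tr : S → A → S → Prop) (B : Set A)
    (R : S → S → Prop) : Prop :=
  ∀ p q, R p q →
    (tm p → tm q) ∧
    (∀ a p', tr p a p' → ∃ q', tr q a q' ∧ R p' q') ∧
    (∀ b q', b ∈ B → tr q b q' → ∃ p', tr p b p' ∧ R p' q')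

/-- The partial bisimilarity preorder ≤_B. -/
def PbLe (tm : S → Prop) (tr : S → A → S → Prop) (B : Set A) (p q : S) : Prop :=
  ∃ R, IsPB tm tr B R ∧ R p q

/-- R is a simulation. -/
def IsSim (tm : S → Prop) (tr : S → A → S → Prop) (R : S → S → Prop) : Prop :=
  ∀ p q, R p q →
    (tm p → tm q) ∧
    (∀ a p', tr p a p' → ∃ q', tr q a q' ∧ R p' q')

/-- Strong similarity preorder. -/
def SimLe (tm : S → Prop) (tr : S → A → S → Prop) (p q : S) : Prop :=
  ∃ R, IsSim tm tr R ∧ R p q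

/-- R is a bisimulation: R and its inverse are simulations. -/
def IsBisim (tm : S → Prop) (tr : S → A → S → Prop) (R : S → S → Prop) : Prop :=
  IsSim tm tr R ∧ IsSim tm tr (fun p q => R q p)

/-- Strong bisimilarity. -/
def Bisimilar (tm : S → Prop) (tr : S → A → S → Prop) (p q : S) : Prop :=
  ∃ R, IsBisim tm tr R ∧ R p q

/-- A strong bisimulation: a symmetric relation matching termination and transitions. -/
def IsStrongBisim (tm : S → Prop) (tr : S → A → S → Prop) (R : S → S → Prop) : Prop :=
  Symmetric R ∧ ∀ p q, R p q →
    (tm p ↔ tm q) ∧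
    (∀ a p', tr p a p' → ∃ q', tr q a q' ∧ R p' q')

/-- P is a partition of S: nonempty, covering, pairwise-disjoint classes. -/
def IsPartition' (P : Set (Set S)) : Prop :=
  (∀ Q ∈ P, Q.Nonempty) ∧ (∀ s : S, ∃ Q ∈ P, s ∈ Q) ∧
  (∀ Q ∈ P, ∀ R ∈ P, (Q ∩ R).Nonempty → Q = R)

/-- Partition-relation pair: a partition with a partial order on its classes. -/
def IsPRP (P : Set (Set S)) (le : Set S → Set S → Prop) : Prop :=
  IsPartition' P ∧
  (∀ Q R, le Q R → Q ∈ P ∧ R ∈ P) ∧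
  (∀ Q ∈ P, le Q Q) ∧
  (∀ Q R, le Q R → le R Q → Q = R) ∧
  (∀ Q R T, le Q R → le R T → le Q T)

/-- Every state of P has an a-transition into X. -/
def AllTr (tr : S → A → S → Prop) (a : A) (P X : Set S) : Prop :=
  ∀ p ∈ P, ∃ x ∈ X, tr p a x

/-- Some state of P has an a-transition into X. -/
def ExTr (tr : S → A → S → Prop) (a : A) (P X : Set S) : Prop :=
  ∃ p ∈ P, ∃ x ∈ X, tr p a x

/-- bb(R): union of all big brother classes of R. -/
def bigBro (P : Set (Set S)) (le : Set S → Set S → Prop) (R : Set S) : Set S :=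
  {x | ∃ Q ∈ P, le R Q ∧ x ∈ Q}

/-- lb(R): union of all little brother classes of R. -/
def litBro (P : Set (Set S)) (le : Set S → Set S → Prop) (R : Set S) : Set S :=
  {x | ∃ Q ∈ P, le Q R ∧ x ∈ Q}

/-- Stability of a partition-relation pair (Definition of stability conditions a-d). -/
def IsStable (tm : S → Prop) (tr : S → A → S → Prop) (B : Set A)
    (P : Set (Set S)) (le : Set S → Set S → Prop) : Prop :=
  (∀ Q ∈ P, (∀ q ∈ Q, tm q) ∨ (∀ q ∈ Q, ¬ tm q)) ∧
  (∀ Q R, le Q R → (∀ q ∈ Q, tm q) → (∀ r ∈ R, tm r)) ∧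
  (∀ Q Q' R, R ∈ P → le Q Q' → ∀ a, ExTr tr a Q R → AllTr tr a Q' (bigBro P le R)) ∧
  (∀ Q Q' R, R ∈ P → le Q Q' → ∀ b ∈ B, ExTr tr b Q' R → AllTr tr b Q (litBro P le R))

/-- The order ◁ on partition-relation pairs. -/
def Lhd (P₁ : Set (Set S)) (le₁ : Set S → Set S → Prop)
    (P₂ : Set (Set S)) (le₂ : Set S → Set S → Prop) : Prop :=
  ∀ Q R, le₁ Q R → ∃ Q' ∈ P₂, ∃ R' ∈ P₂, Q ⊆ Q' ∧ R ⊆ R' ∧ le₂ Q' R'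

/-- The relation on states induced by a partition-relation pair. -/
def IndRel (P : Set (Set S)) (le : Set S → Set S → Prop) (p q : S) : Prop :=
  ∃ Q ∈ P, ∃ R ∈ P, le Q R ∧ p ∈ Q ∧ q ∈ R

/-- Equivalence classes of the equivalence kernel R ∩ R⁻¹ of a preorder R. -/
def eqClasses (R : S → S → Prop) : Set (Set S) :=
  {C | ∃ p, C = {q | R p q ∧ R q p}}

/-- The class order induced by a preorder R on its equivalence classes. -/
def classLe (R : S → S → Prop) (Q T : Set S) : Prop :=
  Q ∈ eqClasses R ∧ T ∈ eqClasses R ∧ ∃ p ∈ Q, ∃ q ∈ T, R p q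

/-- The little brother relation ≤' induced on a parent partition P'. -/
def IndLe (le : Set S → Set S → Prop) (P' : Set (Set S)) (Q' R' : Set S) : Prop :=
  Q' ∈ P' ∧ R' ∈ P' ∧ ∃ Q R, le Q R ∧ Q ⊆ Q' ∧ R ⊆ R'

/-- bb'(R') with respect to a parent partition. -/
def bigBro' (le : Set S → Set S → Prop) (P' : Set (Set S)) (R' : Set S) : Set S :=
  {x | ∃ Q' ∈ P', IndLe le P' R' Q' ∧ x ∈ Q'}

/-- lb'(R') with respect to a parent partition. -/
def litBro' (le : Set S → Set S → Prop) (P' : Set (Set S)) (R' : Set S) : Set S :=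
  {x | ∃ Q' ∈ P', IndLe le P' Q' R' ∧ x ∈ Q'}

/-- Stability conditions 1-4 of (P, le) with respect to a parent partition P'. -/
def StableWrt (tm : S → Prop) (tr : S → A → S → Prop) (B : Set A)
    (P : Set (Set S)) (le : Set S → Set S → Prop) (P' : Set (Set S)) : Prop :=
  (∀ Q ∈ P, ∀ a, ∀ R' ∈ P', ExTr tr a Q R' → AllTr tr a Q (bigBro' le P' R')) ∧
  (∀ Q ∈ P, ∀ b ∈ B, ∀ R' ∈ P', ExTr tr b Q R' → AllTr tr b Q (litBro' le P' R')) ∧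
  (∀ Q T, le Q T → ∀ a, ∀ R' ∈ P', AllTr tr a Q R' → AllTr tr a T (bigBro' le P' R')) ∧
  (∀ Q T, le Q T → ∀ b ∈ B, ∀ R' ∈ P', AllTr tr b T R' → AllTr tr b Q (litBro' le P' R'))

/-- P' is a parent partition of P. -/
def IsParent (P P' : Set (Set S)) : Prop :=
  IsPartition' P' ∧ ∀ Q ∈ P, ∃ Q' ∈ P', Q ⊆ Q'

/-- The partition obtained by splitting the class P₀ of P' into S' and P₀ \ S'. -/
def splitPart (P' : Set (Set S)) (P₀ Sp : Set S) : Set (Set S) :=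
  (P' \ {P₀}) ∪ {Sp, P₀ \ Sp}

/-- Some le-related pair of classes lies inside (X, Y). -/
def relBetween (le : Set S → Set S → Prop) (X Y : Set S) : Prop :=
  ∃ Q R, le Q R ∧ Q ⊆ X ∧ R ⊆ Y

/-- Sp is a splitter of the class P₀ of the parent partition P' with respect to P. -/
def IsSplitter (P : Set (Set S)) (le : Set S → Set S → Prop)
    (P' : Set (Set S)) (P₀ Sp : Set S) : Prop :=
  P₀ ∈ P' ∧ Sp ⊆ P₀ ∧ Sp.Nonempty ∧ (P₀ \ Sp).Nonempty ∧
  (∀ Q ∈ P, Q ⊆ Sp ∨ Q ∩ Sp = ∅) ∧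
  (relBetween le Sp (P₀ \ Sp) ∨
    (¬ relBetween le Sp (P₀ \ Sp) ∧ ¬ relBetween le (P₀ \ Sp) Sp))

/-- (Pr, ler) is the result Refine(P, le, P', Sp): the ◁-coarsest pair ◁-below (P, le)
stable with respect to the split parent partition. -/
def IsRefineOf (tm : S → Prop) (tr : S → A → S → Prop) (B : Set A)
    (P : Set (Set S)) (le : Set S → Set S → Prop)
    (P' : Set (Set S)) (P₀ Sp : Set S)
    (Pr : Set (Set S)) (ler : Set S → Set S → Prop) : Prop :=
  IsPRP Pr ler ∧ Lhd Pr ler P le ∧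
  StableWrt tm tr B Pr ler (splitPart P' P₀ Sp) ∧
  ∀ Q lq, IsPRP Q lq → Lhd Q lq P le →
    StableWrt tm tr B Q lq (splitPart P' P₀ Sp) → Lhd Q lq Pr ler

section Aux

variable {tm : S → Prop} {tr : S → A → S → Prop} {B : Set A}

lemma pbLe_refl (p : S) : PbLe tm tr B p p :=
  ⟨Eq, fun x y h => by
    subst h
    exact ⟨id, fun a p' h => ⟨p', h, rfl⟩, fun b q' _ h => ⟨q', h, rfl⟩⟩, rfl⟩

lemma pbLe_isPB : IsPB tm tr B (PbLe tm tr B) := by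
  rintro p q ⟨R, hR, hpq⟩
  obtain ⟨h1, h2, h3⟩ := hR p q hpq
  refine ⟨h1, ?_, ?_⟩
  · intro a p' h
    obtain ⟨q', hq', hR'⟩ := h2 a p' h
    exact ⟨q', hq', R, hR, hR'⟩
  · intro b q' hb h
    obtain ⟨p', hp', hR'⟩ := h3 b q' hb h
    exact ⟨p', hp', R, hR, hR'⟩

lemma pbLe_trans {p q r : S} (h1 : PbLe tm tr B p q) (h2 : PbLe tm tr B q r) :
    PbLe tm tr B p r := by
  refine ⟨fun x z => ∃ y, PbLe tm tr B x y ∧ PbLe tm tr B y z, ?_, q, h1, h2⟩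
  rintro x z ⟨y, hxy, hyz⟩
  obtain ⟨a1, a2, a3⟩ := pbLe_isPB x y hxy
  obtain ⟨b1, b2, b3⟩ := pbLe_isPB y z hyz
  refine ⟨fun h => b1 (a1 h), ?_, ?_⟩
  · intro a p' h
    obtain ⟨y', hy', h1'⟩ := a2 a p' h
    obtain ⟨z', hz', h2'⟩ := b2 a y' hy'
    exact ⟨z', hz', y', h1', h2'⟩
  · intro b z' hb h
    obtain ⟨y', hy', h2'⟩ := b3 b z' hb h
    obtain ⟨x', hx', h1'⟩ := a3 b y' hb hy'
    exact ⟨x', hx', y', h1', h2'⟩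

lemma class_eq {C : Set S} (hC : C ∈ eqClasses (PbLe tm tr B)) {p : S} (hp : p ∈ C) :
    C = {q | PbLe tm tr B p q ∧ PbLe tm tr B q p} := by
  obtain ⟨r, rfl⟩ := hC
  obtain ⟨hrp, hpr⟩ := hp
  ext q
  constructor
  · rintro ⟨hrq, hqr⟩
    exact ⟨pbLe_trans hpr hrq, pbLe_trans hqr hrp⟩
  · rintro ⟨hpq, hqp⟩
    exact ⟨pbLe_trans hrp hpq, pbLe_trans hqp hpr⟩

lemma mem_own_class (p : S) :
    p ∈ {q | PbLe tm tr B p q ∧ PbLe tm tr B q p} := ⟨pbLe_refl p, pbLe_refl p⟩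

lemma own_class_mem (p : S) :
    {q | PbLe tm tr B p q ∧ PbLe tm tr B q p} ∈ eqClasses (PbLe tm tr B) := ⟨p, rfl⟩

/-- From classLe Q R, and members p ∈ Q, q ∈ R, we get PbLe p q. -/
lemma classLe_mem {Q R : Set S} (h : classLe (PbLe tm tr B) Q R)
    {p q : S} (hp : p ∈ Q) (hq : q ∈ R) : PbLe tm tr B p q := by
  obtain ⟨hQ, hR, p₀, hp₀, q₀, hq₀, hle⟩ := h
  have e1 : p₀ ∈ {x | PbLe tm tr B p x ∧ PbLe tm tr B x p} := (class_eq hQ hp) ▸ hp₀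
  have e2 : q ∈ {x | PbLe tm tr B q₀ x ∧ PbLe tm tr B x q₀} := (class_eq hR hq₀) ▸ hq
  exact pbLe_trans e1.1 (pbLe_trans hle e2.1)

lemma indRel_isPB (P' : Set (Set S)) (le' : Set S → Set S → Prop)
    (hprp : IsPRP P' le') (hst : IsStable tm tr B P' le') :
    IsPB tm tr B (IndRel P' le') := by
  obtain ⟨⟨hne, hcov, hdisj⟩, hdom, hrefl, hanti, htrans⟩ := hprp
  obtain ⟨sa, sb, sc, sd⟩ := hst
  rintro p q ⟨Q, hQ, R, hR, hle, hpQ, hqR⟩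
  refine ⟨?_, ?_, ?_⟩
  · intro htp
    have : ∀ x ∈ Q, tm x := (sa Q hQ).resolve_right (fun h => h p hpQ htp)
    exact sb Q R hle this q hqR
  · intro a p' hstep
    obtain ⟨R₁, hR₁, hp'⟩ := hcov p'
    obtain ⟨q', hq'bb, hq'tr⟩ := sc Q R R₁ hR₁ hle a ⟨p, hpQ, p', hp', hstep⟩ q hqR
    obtain ⟨T, hT, hleT, hq'T⟩ := hq'bb
    exact ⟨q', hq'tr, R₁, hR₁, T, hT, hleT, hp', hq'T⟩
  · intro b q' hb hstep
    obtain ⟨R₁, hR₁, hq'⟩ := hcov q'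
    obtain ⟨p', hp'lb, hp'tr⟩ := sd Q R R₁ hR₁ hle b hb ⟨q, hqR, q', hq', hstep⟩ p hpQ
    obtain ⟨T, hT, hleT, hp'T⟩ := hp'lb
    exact ⟨p', hp'tr, T, hT, R₁, hR₁, hleT, hp'T, hq'⟩

end Aux

/-- the pair induced by partial bisimilarity is the ◁-maximal stable
partition-relation pair. -/
theorem lhd_maximal (tm : S → Prop) (tr : S → A → S → Prop) (B : Set A) :
    IsPRP (eqClasses (PbLe tm tr B)) (classLe (PbLe tm tr B)) ∧
    IsStable tm tr B (eqClasses (PbLe tm tr B)) (classLe (PbLe tm tr B)) ∧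
    (∀ (P' : Set (Set S)) (le' : Set S → Set S → Prop),
      IsPRP P' le' → IsStable tm tr B P' le' →
      Lhd P' le' (eqClasses (PbLe tm tr B)) (classLe (PbLe tm tr B))) := by
  refine ⟨⟨⟨?_, ?_, ?_⟩, ?_, ?_, ?_, ?_⟩, ⟨?_, ?_, ?_, ?_⟩, ?_⟩
  -- Partition: nonempty
  · rintro Q ⟨p, rfl⟩
    exact ⟨p, mem_own_class p⟩
  -- covering
  · intro s
    exact ⟨_, own_class_mem s, mem_own_class s⟩
  -- disjoint
  · rintro Q hQ R hR ⟨x, hxQ, hxR⟩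
    rw [class_eq hQ hxQ, class_eq hR hxR]
  -- le only on classes
  · rintro Q R ⟨hQ, hR, _⟩
    exact ⟨hQ, hR⟩
  -- reflexivity
  · rintro Q hQ
    obtain ⟨p, rfl⟩ := hQ
    exact ⟨⟨p, rfl⟩, ⟨p, rfl⟩, p, mem_own_class p, p, mem_own_class p, pbLe_refl p⟩
  -- antisymmetry
  · rintro Q R h1 h2
    obtain ⟨hQ, hR, p, hp, q, hq, hpq⟩ := h1
    have hqp : PbLe tm tr B q p := classLe_mem h2 hq hp
    rw [class_eq hQ hp, class_eq hR hq]
    ext x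
    constructor
    · rintro ⟨h1', h2'⟩
      exact ⟨pbLe_trans hqp h1', pbLe_trans h2' hpq⟩
    · rintro ⟨h1', h2'⟩
      exact ⟨pbLe_trans hpq h1', pbLe_trans h2' hqp⟩
  -- transitivity
  · rintro Q R T h1 h2
    obtain ⟨hQ, hR, p, hp, q, hq, hpq⟩ := h1
    obtain ⟨_, hT, r, hr, t, ht, hrt⟩ := h2
    exact ⟨hQ, hT, p, hp, t, ht,
      pbLe_trans hpq (pbLe_trans (classLe_mem ⟨hR, hR, q, hq, q, hq, pbLe_refl q⟩ hq hr) hrt)⟩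
  -- Stability (a): uniform termination
  · intro Q hQ
    by_cases h : ∀ q ∈ Q, tm q
    · exact Or.inl h
    · right
      push_neg at h
      obtain ⟨q₀, hq₀, hnt⟩ := h
      intro q hq htq
      have hle : PbLe tm tr B q q₀ := by
        have := (class_eq hQ hq₀) ▸ hq
        exact this.2
      exact hnt ((pbLe_isPB q q₀ hle).1 htq)
  -- Stability (b)
  · intro Q R hle hall r hr
    obtain ⟨hQ, _, p, hp, _, _, _⟩ := id hle
    exact (pbLe_isPB p r (classLe_mem hle hp hr)).1 (hall p hp)
  -- Stability (c)
  · rintro Q Q' R hR hle a ⟨p, hp, x, hx, htr⟩ q hq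
    have hpq : PbLe tm tr B p q := classLe_mem hle hp hq
    obtain ⟨y, hy, hxy⟩ := (pbLe_isPB p q hpq).2.1 a x htr
    refine ⟨y, ⟨_, own_class_mem y, ⟨hR, own_class_mem y, x, hx, y, mem_own_class y, hxy⟩,
      mem_own_class y⟩, hy⟩
  -- Stability (d)
  · rintro Q Q' R hR hle b hb ⟨q, hq, x, hx, htr⟩ p hp
    have hpq : PbLe tm tr B p q := classLe_mem hle hp hq
    obtain ⟨y, hy, hyx⟩ := (pbLe_isPB p q hpq).2.2 b x hb htr
    refine ⟨y, ⟨_, own_class_mem y, ⟨own_class_mem y, hR, y, mem_own_class y, x, hx, hyx⟩,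
      mem_own_class y⟩, hy⟩
  -- Maximality
  · intro P' le' hprp hst Q R hle
    have hPB := indRel_isPB P' le' hprp hst
    obtain ⟨⟨hne, hcov, hdisj⟩, hdom, hrefl, hanti, htrans⟩ := hprp
    obtain ⟨hQ, hR⟩ := hdom Q R hle
    obtain ⟨p, hp⟩ := hne Q hQ
    obtain ⟨q, hq⟩ := hne R hR
    have key : ∀ (T : Set S), T ∈ P' → ∀ x ∈ T, ∀ y ∈ T,
        PbLe tm tr B x y := by
      intro T hT x hx y hy
      exact ⟨IndRel P' le', hPB, T, hT, T, hT, hrefl T hT, hx, hy⟩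
    refine ⟨_, own_class_mem p, _, own_class_mem q, ?_, ?_, ?_⟩
    · intro x hx
      exact ⟨key Q hQ p hp x hx, key Q hQ x hx p hp⟩
    · intro x hx
      exact ⟨key R hR q hq x hx, key R hR x hx q hq⟩
    · exact ⟨own_class_mem p, own_class_mem q, p, mem_own_class p, q, mem_own_class q,
        IndRel P' le', hPB, Q, hQ, R, hR, hle, hp, hq⟩
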